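/- Assume the noise variables w_1,…,w_T are independent and each takes only finitely many values, assume each value function V_t is measurable, and suppose that for each t = 0,…,T−1 there is a measurable feedback φ*_t : 𝕏_t → 𝕌_t such that φ*_t(x) attains the infimum defining V_t(x) for every x ∈ 𝕏_t. Then for every t ∈ {0,…,T−1} and every x ∈ 𝕏_t: J_t(x, φ*_t,…,φ*_{T−1}) = V_t(x), and V_t(x) ≤ J_t(x, φ_t,…,φ_{T−1}) for every choice of measurable feedbacks φ_s : 𝕏_s → 𝕌_s (s = t,…,T−1). In other words, the truncated feedback sequence (φ*_t,…,φ*_{T−1}) is optimal for the feedback problem starting at time t for every initial state x ∈ 𝕏_t. -/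

import Mathlib

open MeasureTheory ProbabilityTheory
open scoped ENNReal BigOperators

section Setup

variable {Ω : Type*} [MeasurableSpace Ω] {T : ℕ}
  {𝕏 : ℕ → Type*} [∀ t, MeasurableSpace (𝕏 t)]
  {𝕌 : ℕ → Type*} [∀ t, MeasurableSpace (𝕌 t)]
  {𝕎 : ℕ → Type*} [∀ t, MeasurableSpace (𝕎 t)]

/-- Pathwise cumulated cost of the closed-loop system driven by the feedbacks `φ`
starting from state `x` at time `t`:
`∑_{s=t}^{T−1} L_s(X_s, φ_s(X_s), w_{s+1}) + K(X_T)` where `X_t = x` and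
`X_{s+1} = f_s(X_s, φ_s(X_s), w_{s+1})`. The feedback cost `J_t(x, φ_t, …, φ_{T−1})`
is its expectation. -/
noncomputable def feedbackCost (T : ℕ) (w : (t : ℕ) → Ω → 𝕎 t)
    (f : (t : ℕ) → 𝕏 t → 𝕌 t → 𝕎 (t + 1) → 𝕏 (t + 1))
    (L : (t : ℕ) → 𝕏 t → 𝕌 t → 𝕎 (t + 1) → ℝ≥0∞)
    (K : 𝕏 T → ℝ≥0∞) (φ : (s : ℕ) → 𝕏 s → 𝕌 s)
    (t : ℕ) (x : 𝕏 t) (ω : Ω) : ℝ≥0∞ :=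
  if h : t < T then
    L t x (φ t x) (w (t + 1) ω)
      + feedbackCost T w f L K φ (t + 1) (f t x (φ t x) (w (t + 1) ω)) ω
  else if h' : t = T then K (h' ▸ x) else 0
  termination_by T - t
  decreasing_by omega

end Setup

section AuxLemmas

variable {Ω : Type*} [MeasurableSpace Ω] {T : ℕ}
  {𝕏 : ℕ → Type*} [∀ t, MeasurableSpace (𝕏 t)]
  {𝕌 : ℕ → Type*} [∀ t, MeasurableSpace (𝕌 t)]
  {𝕎 : ℕ → Type*} [∀ t, MeasurableSpace (𝕎 t)]
  {w : (t : ℕ) → Ω → 𝕎 t}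
  {f : (t : ℕ) → 𝕏 t → 𝕌 t → 𝕎 (t + 1) → 𝕏 (t + 1)}
  {L : (t : ℕ) → 𝕏 t → 𝕌 t → 𝕎 (t + 1) → ℝ≥0∞}
  {K : 𝕏 T → ℝ≥0∞} {φ : (s : ℕ) → 𝕏 s → 𝕌 s}

lemma feedbackCost_of_lt {t : ℕ} (h : t < T) (x : 𝕏 t) (ω : Ω) :
    feedbackCost T w f L K φ t x ω
      = L t x (φ t x) (w (t + 1) ω)
        + feedbackCost T w f L K φ (t + 1) (f t x (φ t x) (w (t + 1) ω)) ω := by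
  rw [feedbackCost, dif_pos h]

lemma feedbackCost_at_T (x : 𝕏 T) (ω : Ω) :
    feedbackCost T w f L K φ T x ω = K x := by
  rw [feedbackCost, dif_neg (lt_irrefl T), dif_pos rfl]

/-- The pathwise feedback cost at time `t` factors measurably through the noises
`w_{t+1}, …, w_T` (indices `i : Fin T` with `t ≤ i`). -/
lemma feedbackCost_factor
    (hf : ∀ t, Measurable fun p : 𝕏 t × 𝕌 t × 𝕎 (t + 1) => f t p.1 p.2.1 p.2.2)
    (hL : ∀ t, Measurable fun p : 𝕏 t × 𝕌 t × 𝕎 (t + 1) => L t p.1 p.2.1 p.2.2)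
    (hK : Measurable K) (hφ : ∀ s, Measurable (φ s)) :
    ∀ d t, t + d = T →
      ∃ g : 𝕏 t × ((i : (Finset.univ.filter (fun i : Fin T => t ≤ i.1))) → 𝕎 (i.1.1 + 1))
          → ℝ≥0∞,
        Measurable g ∧ ∀ (x : 𝕏 t) (ω : Ω),
          feedbackCost T w f L K φ t x ω = g (x, fun i => w (i.1.1 + 1) ω) := by
  intro d
  induction d with
  | zero =>
    intro t ht
    have ht' : t = T := by omega
    subst ht'
    exact ⟨fun p => K p.1, hK.comp measurable_fst, fun x ω => feedbackCost_at_T x ω⟩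
  | succ d IH =>
    intro t htd
    have ht : t < T := by omega
    obtain ⟨g', hg', hfac'⟩ := IH (t + 1) (by omega)
    have htmem : (⟨t, ht⟩ : Fin T) ∈ Finset.univ.filter (fun i : Fin T => t ≤ i.1) := by
      simp
    set it : (Finset.univ.filter (fun i : Fin T => t ≤ i.1)) := ⟨⟨t, ht⟩, htmem⟩ with hit
    have hres : ∀ i : (Finset.univ.filter (fun i : Fin T => t + 1 ≤ i.1)),
        i.1 ∈ Finset.univ.filter (fun i : Fin T => t ≤ i.1) := by
      intro i
      have := i.2
      simp only [Finset.mem_filter, Finset.mem_univ, true_and] at this ⊢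
      omega
    refine ⟨fun p =>
        L t p.1 (φ t p.1) (p.2 it)
          + g' (f t p.1 (φ t p.1) (p.2 it), fun i => p.2 ⟨i.1, hres i⟩), ?_, ?_⟩
    · have hev : Measurable fun p :
          𝕏 t × ((i : (Finset.univ.filter (fun i : Fin T => t ≤ i.1))) → 𝕎 (i.1.1 + 1)) =>
          p.2 it := (measurable_pi_apply it).comp measurable_snd
      have htriple : Measurable fun p :
          𝕏 t × ((i : (Finset.univ.filter (fun i : Fin T => t ≤ i.1))) → 𝕎 (i.1.1 + 1)) =>
          (p.1, φ t p.1, p.2 it) :=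
        measurable_fst.prodMk (((hφ t).comp measurable_fst).prodMk hev)
      have h1 : Measurable fun p :
          𝕏 t × ((i : (Finset.univ.filter (fun i : Fin T => t ≤ i.1))) → 𝕎 (i.1.1 + 1)) =>
          L t p.1 (φ t p.1) (p.2 it) := (hL t).comp htriple
      have h2 : Measurable fun p :
          𝕏 t × ((i : (Finset.univ.filter (fun i : Fin T => t ≤ i.1))) → 𝕎 (i.1.1 + 1)) =>
          f t p.1 (φ t p.1) (p.2 it) := (hf t).comp htriple
      have h3 : Measurable fun p :
          𝕏 t × ((i : (Finset.univ.filter (fun i : Fin T => t ≤ i.1))) → 𝕎 (i.1.1 + 1)) =>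
          (fun i : (Finset.univ.filter (fun i : Fin T => t + 1 ≤ i.1)) =>
            p.2 ⟨i.1, hres i⟩) :=
        measurable_pi_lambda _ fun i => (measurable_pi_apply _).comp measurable_snd
      exact h1.add (hg'.comp (h2.prodMk h3))
    · intro x ω
      rw [feedbackCost_of_lt ht, hfac']

/-- The key interchange identity: by independence of the noises, the expected
feedback cost at time `t < T` equals the expectation of the instantaneous cost plus
the expected cost-to-go from the (random) next state. -/
lemma feedbackCost_interchange
    (μ : Measure Ω) [IsProbabilityMeasure μ]
    (hw : ∀ t, Measurable (w t))
    (hindep : iIndepFun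
      (fun t : Fin T => w (t.1 + 1)) μ)
    (hf : ∀ t, Measurable fun p : 𝕏 t × 𝕌 t × 𝕎 (t + 1) => f t p.1 p.2.1 p.2.2)
    (hL : ∀ t, Measurable fun p : 𝕏 t × 𝕌 t × 𝕎 (t + 1) => L t p.1 p.2.1 p.2.2)
    (hK : Measurable K) (hφ : ∀ s, Measurable (φ s))
    {t : ℕ} (ht : t < T) (x : 𝕏 t) :
    ∫⁻ ω, feedbackCost T w f L K φ t x ω ∂μ
      = ∫⁻ ω, L t x (φ t x) (w (t + 1) ω)
          + ∫⁻ ω', feedbackCost T w f L K φ (t + 1)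
              (f t x (φ t x) (w (t + 1) ω)) ω' ∂μ ∂μ := by
  obtain ⟨g, hg, hfac⟩ := feedbackCost_factor (w := w) hf hL hK hφ (T - (t + 1)) (t + 1) (by omega)
  set u : 𝕌 t := φ t x with hu
  set Y : Ω → ((i : (Finset.univ.filter (fun i : Fin T => t + 1 ≤ i.1))) → 𝕎 (i.1.1 + 1)) :=
    fun ω i => w (i.1.1 + 1) ω with hY
  have hYm : Measurable Y := measurable_pi_lambda _ fun i => hw _
  have hXm : Measurable (w (t + 1)) := hw _
  -- independence of `w (t+1)` and the tuple of later noises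
  have hdisj : Disjoint ({(⟨t, ht⟩ : Fin T)} : Finset (Fin T))
      (Finset.univ.filter (fun i : Fin T => t + 1 ≤ i.1)) := by
    simp only [Finset.disjoint_left, Finset.mem_singleton, Finset.mem_filter, Finset.mem_univ,
      true_and]
    rintro a rfl
    simp
  have hind0 := hindep.indepFun_finset {(⟨t, ht⟩ : Fin T)}
    (Finset.univ.filter (fun i : Fin T => t + 1 ≤ i.1)) hdisj (fun i => hw _)
  have hind : IndepFun (w (t + 1)) Y μ := by
    have h := hind0.comp (_mγ := inferInstance)
      (φ := fun v : (i : ({(⟨t, ht⟩ : Fin T)} : Finset (Fin T))) → 𝕎 (i.1.1 + 1) =>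
        v ⟨⟨t, ht⟩, Finset.mem_singleton_self _⟩)
      (ψ := fun v : (i : (Finset.univ.filter (fun i : Fin T => t + 1 ≤ i.1))) → 𝕎 (i.1.1 + 1)
        => v)
      (measurable_pi_apply _) measurable_id
    exact h
  -- the integrand as a function of the pair `(w (t+1) ω, Y ω)`
  set F : 𝕎 (t + 1) × ((i : (Finset.univ.filter (fun i : Fin T => t + 1 ≤ i.1)))
      → 𝕎 (i.1.1 + 1)) → ℝ≥0∞ :=
    fun p => L t x u p.1 + g (f t x u p.1, p.2) with hF
  have hFm : Measurable F := by
    have h1 : Measurable fun p : 𝕎 (t + 1) ×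
        ((i : (Finset.univ.filter (fun i : Fin T => t + 1 ≤ i.1))) → 𝕎 (i.1.1 + 1)) =>
        L t x u p.1 :=
      (hL t).comp (measurable_const.prodMk (measurable_const.prodMk measurable_fst))
    have h2 : Measurable fun p : 𝕎 (t + 1) ×
        ((i : (Finset.univ.filter (fun i : Fin T => t + 1 ≤ i.1))) → 𝕎 (i.1.1 + 1)) =>
        f t x u p.1 :=
      (hf t).comp (measurable_const.prodMk (measurable_const.prodMk measurable_fst))
    exact h1.add (hg.comp (h2.prodMk measurable_snd))
  haveI : IsProbabilityMeasure (μ.map Y) := Measure.isProbabilityMeasure_map hYm.aemeasurable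
  haveI : IsProbabilityMeasure (μ.map (w (t + 1))) := Measure.isProbabilityMeasure_map hXm.aemeasurable
  have hmap : μ.map (fun ω => (w (t + 1) ω, Y ω))
      = (μ.map (w (t + 1))).prod (μ.map Y) :=
    (indepFun_iff_map_prod_eq_prod_map_map hXm.aemeasurable hYm.aemeasurable).mp hind
  have step1 : ∫⁻ ω, feedbackCost T w f L K φ t x ω ∂μ
      = ∫⁻ ω, F (w (t + 1) ω, Y ω) ∂μ := by
    refine lintegral_congr fun ω => ?_
    rw [feedbackCost_of_lt ht, hfac]
  have step2 : ∫⁻ ω, F (w (t + 1) ω, Y ω) ∂μ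
      = ∫⁻ p, F p ∂((μ.map (w (t + 1))).prod (μ.map Y)) := by
    rw [← hmap, lintegral_map hFm (hXm.prodMk hYm)]
  have step3 : ∫⁻ p, F p ∂((μ.map (w (t + 1))).prod (μ.map Y))
      = ∫⁻ a, L t x u a + ∫⁻ v, g (f t x u a, v) ∂(μ.map Y) ∂(μ.map (w (t + 1))) := by
    rw [lintegral_prod F hFm.aemeasurable]
    refine lintegral_congr fun a => ?_
    rw [hF]
    simp only
    rw [lintegral_add_left measurable_const, lintegral_const, measure_univ, mul_one]
  have hJ : ∀ y : 𝕏 (t + 1),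
      ∫⁻ v, g (y, v) ∂(μ.map Y) = ∫⁻ ω', feedbackCost T w f L K φ (t + 1) y ω' ∂μ := by
    intro y
    rw [lintegral_map (show Measurable fun v => g (y, v) from
      hg.comp (measurable_const.prodMk measurable_id)) hYm]
    exact lintegral_congr fun ω' => (hfac y ω').symm
  have hJm : Measurable fun y : 𝕏 (t + 1) => ∫⁻ v, g (y, v) ∂(μ.map Y) :=
    Measurable.lintegral_prod_right' hg
  have step4 : ∫⁻ a, L t x u a + ∫⁻ v, g (f t x u a, v) ∂(μ.map Y) ∂(μ.map (w (t + 1)))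
      = ∫⁻ ω, L t x u (w (t + 1) ω)
          + ∫⁻ v, g (f t x u (w (t + 1) ω), v) ∂(μ.map Y) ∂μ := by
    rw [lintegral_map ?_ hXm]
    have h1 : Measurable fun a : 𝕎 (t + 1) => L t x u a :=
      (hL t).comp (measurable_const.prodMk (measurable_const.prodMk measurable_id))
    have h2 : Measurable fun a : 𝕎 (t + 1) => f t x u a :=
      (hf t).comp (measurable_const.prodMk (measurable_const.prodMk measurable_id))
    exact h1.add (hJm.comp h2)
  rw [step1, step2, step3, step4]
  exact lintegral_congr fun ω => by rw [hJ]

end AuxLemmas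

/-- **Time consistency of dynamic programming for the classical problem.**
If `(φ*_t)` are measurable feedbacks attaining, for every state, the infimum in the
dynamic programming equation for the value functions `(V_t)`, then for every time `t`
and every initial state `x`, the truncated sequence `(φ*_t, …, φ*_{T−1})` achieves the
value `V_t(x)`, which is a lower bound of the cost of any measurable feedback
sequence: `(φ*_t, …, φ*_{T−1})` is a universal solution at time `t`. -/
theorem classical_dp_time_consistency
    {Ω : Type*} [MeasurableSpace Ω] {T : ℕ}
    {𝕏 : ℕ → Type*} [∀ t, MeasurableSpace (𝕏 t)]
    {𝕌 : ℕ → Type*} [∀ t, MeasurableSpace (𝕌 t)]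
    {𝕎 : ℕ → Type*} [∀ t, MeasurableSpace (𝕎 t)]
    (μ : Measure Ω) [IsProbabilityMeasure μ]
    (w : (t : ℕ) → Ω → 𝕎 t) (hw : ∀ t, Measurable (w t))
    (hindep : iIndepFun
      (fun t : Fin T => w (t.1 + 1)) μ)
    (hfin : ∀ t, 1 ≤ t → t ≤ T → (Set.range (w t)).Finite)
    (f : (t : ℕ) → 𝕏 t → 𝕌 t → 𝕎 (t + 1) → 𝕏 (t + 1))
    (hf : ∀ t, Measurable fun p : 𝕏 t × 𝕌 t × 𝕎 (t + 1) => f t p.1 p.2.1 p.2.2)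
    (L : (t : ℕ) → 𝕏 t → 𝕌 t → 𝕎 (t + 1) → ℝ≥0∞)
    (hL : ∀ t, Measurable fun p : 𝕏 t × 𝕌 t × 𝕎 (t + 1) => L t p.1 p.2.1 p.2.2)
    (K : 𝕏 T → ℝ≥0∞) (hK : Measurable K)
    -- the value functions, given by the dynamic programming equation
    (V : (t : ℕ) → 𝕏 t → ℝ≥0∞)
    (hVmeas : ∀ t, Measurable (V t))
    (hVT : ∀ x : 𝕏 T, V T x = K x)
    (hVrec : ∀ t, t < T → ∀ x : 𝕏 t,
      V t x = ⨅ u : 𝕌 t,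
        ∫⁻ ω, L t x u (w (t + 1) ω) + V (t + 1) (f t x u (w (t + 1) ω)) ∂μ)
    -- the optimal feedbacks, attaining the infimum everywhere
    (φstar : (s : ℕ) → 𝕏 s → 𝕌 s) (hφstar_meas : ∀ s, Measurable (φstar s))
    (hφstar : ∀ t, t < T → ∀ x : 𝕏 t,
      V t x = ∫⁻ ω, L t x (φstar t x) (w (t + 1) ω)
        + V (t + 1) (f t x (φstar t x) (w (t + 1) ω)) ∂μ) :
    ∀ t, t < T → ∀ x : 𝕏 t,
      (∫⁻ ω, feedbackCost T w f L K φstar t x ω ∂μ = V t x) ∧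
      ∀ φ : (s : ℕ) → 𝕏 s → 𝕌 s, (∀ s, Measurable (φ s)) →
        V t x ≤ ∫⁻ ω, feedbackCost T w f L K φ t x ω ∂μ := by
  have main : ∀ d t, t + d = T → ∀ x : 𝕏 t,
      (∫⁻ ω, feedbackCost T w f L K φstar t x ω ∂μ = V t x) ∧
      ∀ φ : (s : ℕ) → 𝕏 s → 𝕌 s, (∀ s, Measurable (φ s)) →
        V t x ≤ ∫⁻ ω, feedbackCost T w f L K φ t x ω ∂μ := by
    intro d
    induction d with
    | zero =>
      intro t ht x
      have ht' : t = T := by omega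
      subst ht'
      have hc : ∀ φ : (s : ℕ) → 𝕏 s → 𝕌 s,
          ∫⁻ ω, feedbackCost t w f L K φ t x ω ∂μ = K x := by
        intro φ
        rw [lintegral_congr (fun ω => feedbackCost_at_T (φ := φ) x ω), lintegral_const,
          measure_univ, mul_one]
      exact ⟨by rw [hc, hVT], fun φ _ => by rw [hc, hVT]⟩
    | succ d IH =>
      intro t htd x
      have ht : t < T := by omega
      constructor
      · rw [feedbackCost_interchange μ hw hindep hf hL hK hφstar_meas ht x,
          hφstar t ht x]
        exact lintegral_congr fun ω => by
          rw [(IH (t + 1) (by omega) _).1]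
      · intro φ hφ
        rw [feedbackCost_interchange μ hw hindep hf hL hK hφ ht x]
        calc V t x
            ≤ ∫⁻ ω, L t x (φ t x) (w (t + 1) ω)
                + V (t + 1) (f t x (φ t x) (w (t + 1) ω)) ∂μ := by
              rw [hVrec t ht x]; exact iInf_le _ _
          _ ≤ _ := lintegral_mono fun ω =>
              add_le_add le_rfl ((IH (t + 1) (by omega) _).2 φ hφ)
  exact fun t ht x => main (T - t) t (by omega) x
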